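/- Let z : ℤ and let p : ℤ be a prime which is irregular in ℤ[i_z], i.e. there exist x y : ℤ with x^2 + z*x*y + y^2 = p or x^2 + z*x*y + y^2 = -p. Then [(∃ x y : ℤ, x^2 + z*x*y + y^2 = p) ∧ (∃ x y : ℤ, x^2 + z*x*y + y^2 = -p)] holds if and only if z = 3 or z = -3. -/
import Mathlib

/-- Descent lemma: for `z ≥ 4`, no solution to `x² - zxy + y² = -1` with `1 ≤ y ≤ x ≤ n`. -/
private lemma desc (z : ℤ) (hz : 4 ≤ z) :
    ∀ n : ℕ, ∀ x y : ℤ, 1 ≤ y → y ≤ x → x ≤ (n : ℤ) →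
      x ^ 2 - z * x * y + y ^ 2 ≠ -1 := by
  intro n
  induction n with
  | zero => intro x y hy hyx hxn; omega
  | succ n ih =>
    intro x y hy hyx hxn heq
    rcases eq_or_lt_of_le hyx with h | h
    · subst h
      nlinarith [sq_nonneg y, mul_pos (lt_of_lt_of_le (by norm_num : (0:ℤ) < 1) hy)
        (lt_of_lt_of_le (by norm_num : (0:ℤ) < 1) hy)]
    · have hxpos : 0 < x := by linarith
      set x' := z * y - x with hx'def
      have hxx' : x * x' = y ^ 2 + 1 := by rw [hx'def]; linear_combination -heq
      have hx'pos : 0 < x' := by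
        by_contra hcon
        push_neg at hcon
        have : x * x' ≤ 0 := mul_nonpos_of_nonneg_of_nonpos hxpos.le hcon
        nlinarith
      have hx'lt : x' < x := by nlinarith [mul_le_mul (by linarith : y ≤ x - 1) (by linarith : y ≤ x - 1) (by linarith) (by linarith : (0:ℤ) ≤ x - 1)]
      have heq' : x' ^ 2 - z * x' * y + y ^ 2 = -1 := by
        rw [hx'def]; linear_combination heq
      have hn : x ≤ (n : ℤ) + 1 := by push_cast at hxn; linarith
      rcases le_total y x' with h1 | h1
      · exact ih x' y hy h1 (by linarith) heq'
      · exact ih y x' (by linarith) h1 (by linarith)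
          (by linear_combination heq')

private lemma no_neg_one (z : ℤ) (hz : 4 ≤ z) (x y : ℤ)
    (heq : x ^ 2 + z * x * y + y ^ 2 = -1) : False := by
  have hxy : x * y < 0 := by
    by_contra hcon
    push_neg at hcon
    have : 0 ≤ z * (x * y) := mul_nonneg (by linarith) hcon
    nlinarith [sq_nonneg x, sq_nonneg y]
  -- reduce to the case x > 0 > y
  have main : ∀ a b : ℤ, 0 < a → b < 0 → a ^ 2 + z * a * b + b ^ 2 = -1 → False := by
    intro a b ha hb h
    set c := -b with hc
    have hc1 : 1 ≤ c := by omega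
    have h' : a ^ 2 - z * a * c + c ^ 2 = -1 := by rw [hc]; linear_combination h
    rcases le_total c a with h1 | h1
    · exact desc z hz a.toNat a c hc1 h1 (Int.self_le_toNat a) h'
    · exact desc z hz c.toNat c a (by linarith) h1 (Int.self_le_toNat c)
        (by linear_combination h')
  rcases mul_neg_iff.mp hxy with ⟨hx, hy⟩ | ⟨hx, hy⟩
  · exact main x y hx hy heq
  · exact main (-x) (-y) (by linarith) (by linarith) (by linear_combination heq)

private lemma neg_one_z (z : ℤ) (h : ∃ x y : ℤ, x ^ 2 + z * x * y + y ^ 2 = -1) :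
    z = 3 ∨ z = -3 := by
  obtain ⟨x, y, h⟩ := h
  by_contra hc
  push_neg at hc
  obtain ⟨h3, h3'⟩ := hc
  rcases le_or_gt 4 z with hz | hz
  · exact no_neg_one z hz x y h
  rcases le_or_gt z (-4) with hz' | hz'
  · exact no_neg_one (-z) (by linarith) x (-y) (by linear_combination h)
  · have hz2 : z ^ 2 ≤ 4 := by nlinarith [(by omega : -2 ≤ z ∧ z ≤ 2).1, (by omega : -2 ≤ z ∧ z ≤ 2).2]
    nlinarith [sq_nonneg (2 * x + z * y), mul_nonneg (by linarith : (0:ℤ) ≤ 4 - z ^ 2) (sq_nonneg y)]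

/-- From a solution of `Q = -p²` with `p ∣ X`, get a solution of `Q = -1`. -/
private lemma step (z p X Y : ℤ) (hp : Prime p)
    (h : X ^ 2 + z * X * Y + Y ^ 2 = -p ^ 2) (hd : p ∣ X) :
    ∃ m k : ℤ, m ^ 2 + z * m * k + k ^ 2 = -1 := by
  obtain ⟨m, hm⟩ := hd
  have hY2 : p ∣ Y ^ 2 := ⟨-p - p * m ^ 2 - z * m * Y, by
    rw [hm] at h; linear_combination h⟩
  obtain ⟨k, hk⟩ := hp.dvd_of_dvd_pow hY2
  refine ⟨m, k, ?_⟩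
  have h2 : p ^ 2 * (m ^ 2 + z * m * k + k ^ 2) = p ^ 2 * (-1) := by
    rw [hm, hk] at h; linear_combination h
  exact mul_left_cancel₀ (pow_ne_zero 2 hp.ne_zero) h2

theorem stmt12 (z p : ℤ) (hp : Prime p)
    (hirr : (∃ x y : ℤ, x ^ 2 + z * x * y + y ^ 2 = p) ∨
            (∃ x y : ℤ, x ^ 2 + z * x * y + y ^ 2 = -p)) :
    ((∃ x y : ℤ, x ^ 2 + z * x * y + y ^ 2 = p) ∧
     (∃ x y : ℤ, x ^ 2 + z * x * y + y ^ 2 = -p)) ↔ (z = 3 ∨ z = -3) := by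
  constructor
  · rintro ⟨⟨a, b, hP⟩, ⟨c, d, hN⟩⟩
    apply neg_one_z z
    have key : p ∣ (a * d - b * c) * (a * c - b * d) :=
      ⟨c * d + a * b, by linear_combination c * d * hP - a * b * hN⟩
    rcases hp.2.2 _ _ key with h1 | h2
    · -- p ∣ ad - bc ; use Q(ac+zad+bd, bc-ad) = -p²
      obtain ⟨k, hk⟩ := h1
      have hdvd : p ∣ b * c - a * d := ⟨-k, by linear_combination -hk⟩
      apply step z p (b * c - a * d) (a * c + z * a * d + b * d) hp ?_ hdvd
      linear_combination (c ^ 2 + z * c * d + d ^ 2) * hP + p * hN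
    · obtain ⟨k, hk⟩ := h2
      apply step z p (a * c - b * d) (a * d + b * c + z * b * d) hp ?_ ⟨k, hk⟩
      linear_combination (c ^ 2 + z * c * d + d ^ 2) * hP + p * hN
  · rintro (rfl | rfl)
    · rcases hirr with ⟨a, b, h⟩ | ⟨a, b, h⟩
      · exact ⟨⟨a, b, h⟩, ⟨a + b, -a - 2 * b, by linear_combination -h⟩⟩
      · exact ⟨⟨a + b, -a - 2 * b, by linear_combination -h⟩, ⟨a, b, h⟩⟩
    · rcases hirr with ⟨a, b, h⟩ | ⟨a, b, h⟩
      · exact ⟨⟨a, b, h⟩, ⟨a - b, a - 2 * b, by linear_combination -h⟩⟩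
      · exact ⟨⟨a - b, a - 2 * b, by linear_combination -h⟩, ⟨a, b, h⟩⟩
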